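/- Let M ≥ 2 and let ψ_{k,m} ∈ ℂ^M, k = 1,…,4, m = 1,…,M−1, be defined by ψ_{1,m} = a e₁ + b e_{m+1}, ψ_{2,m} = b e₁ + a e_{m+1}, ψ_{3,m} = a e₁ − b e_{m+1}, ψ_{4,m} = −b e₁ + a e_{m+1}, with a = √((1−1/√3)/2) and b = e^{i5π/4}√((1+1/√3)/2). Then for any z, z' ∈ ℂ^M with z₁ ≠ 0 and z'₁ ≠ 0, if |⟨z, ψ_{k,m}⟩|² = |⟨z', ψ_{k,m}⟩|² for all k, m, then there exists θ ∈ ℝ with z' = e^{iθ} z. -/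

import Mathlib

open Complex

/-- The constant `a = √((1 − 1/√3)/2)`. -/
noncomputable def aConst : ℂ := (Real.sqrt ((1 - 1 / Real.sqrt 3) / 2) : ℝ)

/-- The constant `b = e^{i5π/4}·√((1 + 1/√3)/2)`. -/
noncomputable def bConst : ℂ :=
  Complex.exp (Complex.I * (5 * Real.pi / 4)) * (Real.sqrt ((1 + 1 / Real.sqrt 3) / 2) : ℝ)

/-- The standard Hermitian inner product `⟨z, v⟩ = Σ_i z_i conj(v_i)` on `ℂ^M`. -/
noncomputable def innM {M : ℕ} (z v : Fin M → ℂ) : ℂ := ∑ i, z i * star (v i)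

/-- The canonical basis vector `e_m` of `ℂ^M`. -/
def eVec {M : ℕ} (m : Fin M) : Fin M → ℂ := fun i => if i = m then 1 else 0

/-- The measurement vectors `ψ_{1,m} = a e₁ + b e_m`, `ψ_{2,m} = b e₁ + a e_m`,
`ψ_{3,m} = a e₁ − b e_m`, `ψ_{4,m} = −b e₁ + a e_m` in `ℂ^M` (here `m` ranges over the
nonzero coordinates, corresponding to `e_{m+1}`, `m = 1,…,M−1`, of the paper). -/
noncomputable def psiVec {M : ℕ} [NeZero M] (k : Fin 4) (m : Fin M) : Fin M → ℂ :=
  ![(fun i => aConst * eVec 0 i + bConst * eVec m i),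
    (fun i => bConst * eVec 0 i + aConst * eVec m i),
    (fun i => aConst * eVec 0 i - bConst * eVec m i),
    (fun i => -bConst * eVec 0 i + aConst * eVec m i)] k

/- ### Auxiliary facts about the constants -/

lemma sqrt3_gt_one : 1 < Real.sqrt 3 := by
  have h3 : Real.sqrt 3 ^ 2 = 3 := Real.sq_sqrt (by norm_num)
  nlinarith [Real.sqrt_nonneg 3]

lemma inv3_pos : 0 < 1 / Real.sqrt 3 := by positivity
lemma inv3_lt : 1 / Real.sqrt 3 < 1 := by
  rw [div_lt_one (by positivity)]; exact sqrt3_gt_one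

lemma na_pos : 0 < (1 - 1 / Real.sqrt 3) / 2 := by have := inv3_lt; linarith
lemma nb_pos : 0 < (1 + 1 / Real.sqrt 3) / 2 := by have := inv3_pos; linarith
lemma na_lt_nb : (1 - 1 / Real.sqrt 3) / 2 < (1 + 1 / Real.sqrt 3) / 2 := by
  have := inv3_pos; linarith

lemma conj_aConst : (starRingEnd ℂ) aConst = aConst := Complex.conj_ofReal _
lemma aConst_sq : aConst * aConst = (((1 - 1 / Real.sqrt 3) / 2 : ℝ) : ℂ) := by
  rw [aConst, ← Complex.ofReal_mul, Real.mul_self_sqrt na_pos.le]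
lemma aConst_ne : aConst ≠ 0 := by
  rw [aConst]; exact_mod_cast (Real.sqrt_pos.2 na_pos).ne'

lemma cos54 : Real.cos (5 * Real.pi / 4) = -(Real.sqrt 2 / 2) := by
  have : (5:ℝ) * Real.pi / 4 = Real.pi + Real.pi / 4 := by ring
  rw [this, Real.cos_add, Real.cos_pi, Real.sin_pi, Real.cos_pi_div_four]; ring
lemma sin54 : Real.sin (5 * Real.pi / 4) = -(Real.sqrt 2 / 2) := by
  have : (5:ℝ) * Real.pi / 4 = Real.pi + Real.pi / 4 := by ring
  rw [this, Real.sin_add, Real.cos_pi, Real.sin_pi, Real.sin_pi_div_four]; ring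

lemma bConst_eq : bConst =
    ((-(Real.sqrt 2 / 2) : ℝ) + (-(Real.sqrt 2 / 2) : ℝ) * Complex.I) *
      ((Real.sqrt ((1 + 1 / Real.sqrt 3) / 2) : ℝ) : ℂ) := by
  rw [bConst, show Complex.I * (5 * (Real.pi : ℂ) / 4) = ((5 * Real.pi / 4 : ℝ) : ℂ) * Complex.I by
      push_cast; ring, Complex.exp_mul_I, ← Complex.ofReal_cos, ← Complex.ofReal_sin, cos54, sin54]

lemma bConst_mul_conj :
    bConst * (starRingEnd ℂ) bConst = (((1 + 1 / Real.sqrt 3) / 2 : ℝ) : ℂ) := by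
  rw [bConst_eq]
  have h2 : ((Real.sqrt 2 : ℝ) : ℂ) ^ 2 = 2 := by
    rw [← Complex.ofReal_pow, Real.sq_sqrt (by norm_num : (2:ℝ) ≥ 0)]; norm_num
  have hs : ((Real.sqrt ((1 + 1 / Real.sqrt 3) / 2) : ℝ) : ℂ) ^ 2
      = (((1 + 1 / Real.sqrt 3) / 2 : ℝ) : ℂ) := by
    rw [← Complex.ofReal_pow, Real.sq_sqrt nb_pos.le]
  simp only [map_mul, map_add, Complex.conj_ofReal, map_neg, Complex.conj_I]
  rw [← hs]
  push_cast
  set S := ((Real.sqrt ((1 + 1 / Real.sqrt 3) / 2) : ℝ) : ℂ)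
  set T := ((Real.sqrt 2 : ℝ) : ℂ)
  linear_combination (-(S^2*T^2)/4) * Complex.I_sq + (S^2/2) * h2

lemma bConst_sq : bConst ^ 2 = (((1 + 1 / Real.sqrt 3) / 2 : ℝ) : ℂ) * Complex.I := by
  rw [bConst_eq]
  have h2 : ((Real.sqrt 2 : ℝ) : ℂ) ^ 2 = 2 := by
    rw [← Complex.ofReal_pow, Real.sq_sqrt (by norm_num : (2:ℝ) ≥ 0)]; norm_num
  have hs : ((Real.sqrt ((1 + 1 / Real.sqrt 3) / 2) : ℝ) : ℂ) ^ 2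
      = (((1 + 1 / Real.sqrt 3) / 2 : ℝ) : ℂ) := by
    rw [← Complex.ofReal_pow, Real.sq_sqrt nb_pos.le]
  rw [← hs]
  push_cast
  set S := ((Real.sqrt ((1 + 1 / Real.sqrt 3) / 2) : ℝ) : ℂ)
  set T := ((Real.sqrt 2 : ℝ) : ℂ)
  linear_combination (S^2*T^2/4) * Complex.I_sq + (Complex.I*S^2/2) * h2

lemma conj_bConst_sq :
    ((starRingEnd ℂ) bConst) ^ 2 = -((((1 + 1 / Real.sqrt 3) / 2 : ℝ) : ℂ) * Complex.I) := by
  rw [← map_pow, bConst_sq, map_mul, Complex.conj_ofReal, Complex.conj_I]; ring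

lemma naC_sq_ne :
    (((1 - 1 / Real.sqrt 3) / 2 : ℝ) : ℂ) ^ 2 - (((1 + 1 / Real.sqrt 3) / 2 : ℝ) : ℂ) ^ 2 ≠ 0 := by
  rw [← Complex.ofReal_pow, ← Complex.ofReal_pow, ← Complex.ofReal_sub, Complex.ofReal_ne_zero]
  nlinarith [na_pos, nb_pos, na_lt_nb]

lemma nbC_ne : (((1 + 1 / Real.sqrt 3) / 2 : ℝ) : ℂ) ≠ 0 := by
  exact_mod_cast nb_pos.ne'

/- ### Evaluation of the inner products -/

lemma innM_eval {M : ℕ} [NeZero M] (z : Fin M → ℂ) {m : Fin M} (hm : m ≠ 0) (α β : ℂ) :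
    innM z (fun i => α * eVec (0 : Fin M) i + β * eVec m i)
      = (starRingEnd ℂ) α * z 0 + (starRingEnd ℂ) β * z m := by
  unfold innM eVec
  have h0 : ∀ i : Fin M,
      z i * star (α * (if i = (0:Fin M) then (1:ℂ) else 0) + β * (if i = m then 1 else 0))
        = (if i = 0 then (starRingEnd ℂ) α * z i else 0)
          + (if i = m then (starRingEnd ℂ) β * z i else 0) := by
    intro i
    split_ifs with h1 h2 <;> simp_all [Complex.star_def] <;> ring
  rw [Finset.sum_congr rfl fun i _ => h0 i, Finset.sum_add_distrib,
    Finset.sum_ite_eq' Finset.univ (0:Fin M), Finset.sum_ite_eq' Finset.univ m]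
  simp

lemma innM_psi0 {M : ℕ} [NeZero M] (z : Fin M → ℂ) {m : Fin M} (hm : m ≠ 0) :
    innM z (psiVec 0 m) = (starRingEnd ℂ) aConst * z 0 + (starRingEnd ℂ) bConst * z m :=
  innM_eval z hm aConst bConst

lemma innM_psi1 {M : ℕ} [NeZero M] (z : Fin M → ℂ) {m : Fin M} (hm : m ≠ 0) :
    innM z (psiVec 1 m) = (starRingEnd ℂ) bConst * z 0 + (starRingEnd ℂ) aConst * z m :=
  innM_eval z hm bConst aConst

lemma innM_psi2 {M : ℕ} [NeZero M] (z : Fin M → ℂ) {m : Fin M} (hm : m ≠ 0) :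
    innM z (psiVec 2 m) = (starRingEnd ℂ) aConst * z 0 + (starRingEnd ℂ) (-bConst) * z m := by
  have : psiVec (2 : Fin 4) m = fun i => aConst * eVec (0 : Fin M) i + (-bConst) * eVec m i := by
    funext i; show aConst * eVec (0:Fin M) i - bConst * eVec m i = _; ring
  rw [this]; exact innM_eval z hm aConst (-bConst)

lemma innM_psi3 {M : ℕ} [NeZero M] (z : Fin M → ℂ) {m : Fin M} (hm : m ≠ 0) :
    innM z (psiVec 3 m) = (starRingEnd ℂ) (-bConst) * z 0 + (starRingEnd ℂ) aConst * z m :=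
  innM_eval z hm (-bConst) aConst

/- ### The abstract algebraic core -/

lemma coreAlg (A B CB na nb u v u' v' cu cv cu' cv' : ℂ)
    (haa : A * A = na) (hbb : B * CB = nb)
    (hb2 : B ^ 2 = nb * Complex.I) (hcb2 : CB ^ 2 = -(nb * Complex.I))
    (hAne : A ≠ 0) (hnbne : nb ≠ 0) (hfacne : na ^ 2 - nb ^ 2 ≠ 0)
    (E1 : (A*u + CB*v) * (A*cu + B*cv) = (A*u' + CB*v') * (A*cu' + B*cv'))
    (E2 : (CB*u + A*v) * (B*cu + A*cv) = (CB*u' + A*v') * (B*cu' + A*cv'))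
    (E3 : (A*u + -CB*v) * (A*cu + -B*cv) = (A*u' + -CB*v') * (A*cu' + -B*cv'))
    (E4 : (-CB*u + A*v) * (-B*cu + A*cv) = (-CB*u' + A*v') * (-B*cu' + A*cv')) :
    u * cu = u' * cu' ∧ cu * v = cu' * v' := by
  have F1 : na*(u*cu) + nb*(v*cv) + A*(B*(u*cv) + CB*(cu*v))
      = na*(u'*cu') + nb*(v'*cv') + A*(B*(u'*cv') + CB*(cu'*v')) := by
    linear_combination E1 - (u*cu - u'*cu')*haa - (v*cv - v'*cv')*hbb
  have F2 : nb*(u*cu) + na*(v*cv) + A*(CB*(u*cv) + B*(cu*v))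
      = nb*(u'*cu') + na*(v'*cv') + A*(CB*(u'*cv') + B*(cu'*v')) := by
    linear_combination E2 - (v*cv - v'*cv')*haa - (u*cu - u'*cu')*hbb
  have F3 : na*(u*cu) + nb*(v*cv) - A*(B*(u*cv) + CB*(cu*v))
      = na*(u'*cu') + nb*(v'*cv') - A*(B*(u'*cv') + CB*(cu'*v')) := by
    linear_combination E3 - (u*cu - u'*cu')*haa - (v*cv - v'*cv')*hbb
  have F4 : nb*(u*cu) + na*(v*cv) - A*(CB*(u*cv) + B*(cu*v))
      = nb*(u'*cu') + na*(v'*cv') - A*(CB*(u'*cv') + B*(cu'*v')) := by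
    linear_combination E4 - (v*cv - v'*cv')*haa - (u*cu - u'*cu')*hbb
  constructor
  · have hfac : (na^2 - nb^2) * (u*cu - u'*cu') = 0 := by
      linear_combination (na/2)*F1 + (na/2)*F3 - (nb/2)*F2 - (nb/2)*F4
    exact sub_eq_zero.1 ((mul_eq_zero.1 hfac).resolve_left hfacne)
  · have hΔfac : (A * (nb * Complex.I)) * (cu*v - cu'*v') = 0 := by
      linear_combination (-CB/4)*F1 + (CB/4)*F3 + (B/4)*F2 - (B/4)*F4
        - (A*(cu*v - cu'*v')/2)*hb2 + (A*(cu*v - cu'*v')/2)*hcb2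
    have hA : A * (nb * Complex.I) ≠ 0 :=
      mul_ne_zero hAne (mul_ne_zero hnbne Complex.I_ne_zero)
    exact sub_eq_zero.1 ((mul_eq_zero.1 hΔfac).resolve_left hA)

/-- Uniqueness up to a global phase for the `4M−4` phase-retrieval measurements: if
`z₁ ≠ 0`, `z'₁ ≠ 0`, and `|⟨z, ψ_{k,m}⟩|² = |⟨z', ψ_{k,m}⟩|²` for all `k` and all
`m ≠ 1`, then `z' = e^{iθ} z` for some real `θ`. -/
theorem stmt9 (M : ℕ) [NeZero M] (hM : 2 ≤ M) (z z' : Fin M → ℂ)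
    (hz : z 0 ≠ 0) (hz' : z' 0 ≠ 0)
    (h : ∀ m : Fin M, m ≠ 0 → ∀ k : Fin 4,
      ‖innM z (psiVec k m)‖ ^ 2 = ‖innM z' (psiVec k m)‖ ^ 2) :
    ∃ θ : ℝ, z' = fun i => Complex.exp (Complex.I * θ) * z i := by
  have key : ∀ m : Fin M, m ≠ 0 →
      z 0 * (starRingEnd ℂ) (z 0) = z' 0 * (starRingEnd ℂ) (z' 0) ∧
      (starRingEnd ℂ) (z 0) * z m = (starRingEnd ℂ) (z' 0) * z' m := by
    intro m hm
    have conv : ∀ k : Fin 4,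
        innM z (psiVec k m) * (starRingEnd ℂ) (innM z (psiVec k m))
          = innM z' (psiVec k m) * (starRingEnd ℂ) (innM z' (psiVec k m)) := by
      intro k
      rw [Complex.mul_conj, Complex.mul_conj]
      exact_mod_cast (by rw [← Complex.sq_norm, ← Complex.sq_norm]; exact h m hm k :
        Complex.normSq (innM z (psiVec k m)) = Complex.normSq (innM z' (psiVec k m)))
    have E1 := conv 0
    have E2 := conv 1
    have E3 := conv 2
    have E4 := conv 3
    rw [innM_psi0 z hm, innM_psi0 z' hm] at E1
    rw [innM_psi1 z hm, innM_psi1 z' hm] at E2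
    rw [innM_psi2 z hm, innM_psi2 z' hm] at E3
    rw [innM_psi3 z hm, innM_psi3 z' hm] at E4
    simp only [map_add, map_mul, map_neg, Complex.conj_conj, conj_aConst] at E1 E2 E3 E4
    exact coreAlg aConst bConst ((starRingEnd ℂ) bConst) _ _
      (z 0) (z m) (z' 0) (z' m)
      ((starRingEnd ℂ) (z 0)) ((starRingEnd ℂ) (z m))
      ((starRingEnd ℂ) (z' 0)) ((starRingEnd ℂ) (z' m))
      aConst_sq bConst_mul_conj bConst_sq conj_bConst_sq
      aConst_ne nbC_ne naC_sq_ne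
      (by linear_combination E1) (by linear_combination E2)
      (by linear_combination E3) (by linear_combination E4)
  have T1 := (key ⟨1, by omega⟩ (by simp [Fin.ext_iff])).1
  have habs : ‖z' 0‖ = ‖z 0‖ := by
    have hn : Complex.normSq (z 0) = Complex.normSq (z' 0) := by
      have := T1
      rw [Complex.mul_conj, Complex.mul_conj] at this
      exact_mod_cast this
    rw [← Complex.sq_norm, ← Complex.sq_norm] at hn
    nlinarith [norm_nonneg (z 0), norm_nonneg (z' 0)]
  refine ⟨(z' 0 / z 0).arg, ?_⟩
  have habs1 : ‖z' 0 / z 0‖ = 1 := by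
    rw [norm_div, habs, div_self (norm_ne_zero_iff.mpr hz)]
  have hexp : Complex.exp (Complex.I * ((z' 0 / z 0).arg : ℝ)) = z' 0 / z 0 := by
    rw [mul_comm]
    have := Complex.norm_mul_exp_arg_mul_I (z' 0 / z 0)
    rwa [habs1, Complex.ofReal_one, one_mul] at this
  funext i
  rw [hexp]
  by_cases hi : i = 0
  · subst hi; field_simp
  · have hΔ := (key i hi).2
    have hcu' : (starRingEnd ℂ) (z' 0) ≠ 0 := by simpa using hz'
    have huv : z 0 * z' i = z' 0 * z i := by
      apply mul_left_cancel₀ hcu'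
      linear_combination (-(z 0))*hΔ + (z i)*T1
    rw [div_mul_eq_mul_div, eq_div_iff hz]
    linear_combination huv
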